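/- For the optimal cubic-spline filter ψ of Proposition 1 with weight w ≡ 1 and delay d ≥ 0, the error system E(z) = z^{-d} - ψ(z)φ(z) is allpass up to scaling: |E(e^{iθ})| = |α₁|^{-d} for every θ ∈ [0, 2π), where α₁ = -2-√3 and φ(z) = (1/6)+(2/3)z⁻¹+(1/6)z⁻². -/

import Mathlib

noncomputable def alpha1 : ℂ := ((-2 - Real.sqrt 3 : ℝ) : ℂ)
noncomputable def alpha2 : ℂ := ((-2 + Real.sqrt 3 : ℝ) : ℂ)

/-- The sampled cubic B-spline transfer function `φ(z) = 1/6 + (2/3)z⁻¹ + (1/6)z⁻²`. -/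
noncomputable def phiCubic (z : ℂ) : ℂ := 1/6 + (2/3) * z⁻¹ + (1/6) * z⁻¹ ^ 2

/-- The `H^∞` optimal filter `ψ(z) = 6z²(z^{-d} - α₁^{-d}) / ((z-α₁)(z-α₂))`. -/
noncomputable def psiOpt (d : ℕ) (z : ℂ) : ℂ :=
  6 * z ^ 2 * (z ^ (-(d : ℤ)) - alpha1 ^ (-(d : ℤ))) / ((z - alpha1) * (z - alpha2))

lemma sqrt3_lt : (1:ℝ) < Real.sqrt 3 := by
  have := Real.sqrt_lt_sqrt (by norm_num) (show (1:ℝ) < 3 by norm_num)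
  simpa using this

lemma hp : alpha1 * alpha2 = 1 := by
  unfold alpha1 alpha2
  have h : Real.sqrt 3 * Real.sqrt 3 = 3 := Real.mul_self_sqrt (by norm_num)
  push_cast
  ring_nf
  rw [show (Real.sqrt 3 : ℂ)^2 = ((Real.sqrt 3 * Real.sqrt 3 : ℝ) : ℂ) by push_cast; ring, h]
  norm_num

lemma hs : alpha1 + alpha2 = -4 := by
  unfold alpha1 alpha2; push_cast; ring

lemma abs_alpha1 : ‖alpha1‖ = 2 + Real.sqrt 3 := by
  unfold alpha1
  rw [Complex.norm_real, Real.norm_eq_abs, abs_of_neg (by nlinarith [sqrt3_lt])]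
  ring

/-- For the optimal cubic-spline filter with unit weight and delay `d`, the error system
`E(z) = z^{-d} - ψ(z)φ(z)` is allpass: its magnitude on the unit circle is constantly
`|α₁|^{-d} = (2+√3)^{-d}`. -/
theorem stmt19 (d : ℕ) : ∀ θ : ℝ,
    ‖(Complex.exp (θ * Complex.I)) ^ (-(d : ℤ)) -
        psiOpt d (Complex.exp (θ * Complex.I)) * phiCubic (Complex.exp (θ * Complex.I))‖
      = (2 + Real.sqrt 3) ^ (-(d : ℤ)) := by
  intro θ
  set z := Complex.exp (θ * Complex.I) with hzdef
  have hz : z ≠ 0 := Complex.exp_ne_zero _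
  have habs : ‖z‖ = 1 := Complex.norm_exp_ofReal_mul_I θ
  have h1 : z - alpha1 ≠ 0 := by
    intro h
    have : z = alpha1 := by linear_combination h
    rw [this, abs_alpha1] at habs
    nlinarith [sqrt3_lt]
  have h2 : z - alpha2 ≠ 0 := by
    intro h
    have hz2 : z = alpha2 := by linear_combination h
    have : ‖alpha2‖ = 2 - Real.sqrt 3 := by
      unfold alpha2
      rw [Complex.norm_real, Real.norm_eq_abs, abs_of_neg (by nlinarith [sqrt3_lt, Real.sq_sqrt (show (3:ℝ) ≥ 0 by norm_num)])]
      ring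
    rw [hz2, this] at habs
    nlinarith [sqrt3_lt, Real.sq_sqrt (show (3:ℝ) ≥ 0 by norm_num)]
  have ha1 : alpha1 ≠ 0 := by
    intro h
    have := abs_alpha1
    rw [h] at this
    simp at this
    nlinarith [sqrt3_lt]
  have hden : (z - alpha1) * (z - alpha2) ≠ 0 := mul_ne_zero h1 h2
  have h6 : (6 : ℂ) * z ^ 2 ≠ 0 := mul_ne_zero (by norm_num) (pow_ne_zero _ hz)
  have hphi : phiCubic z = (z - alpha1) * (z - alpha2) / (6 * z ^ 2) := by
    unfold phiCubic
    rw [eq_div_iff h6]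
    field_simp
    linear_combination -3*hp + 3*z*hs
  have hmul : psiOpt d z * phiCubic z = z ^ (-(d : ℤ)) - alpha1 ^ (-(d : ℤ)) := by
    rw [hphi]
    unfold psiOpt
    rw [div_mul_div_comm, div_eq_iff (mul_ne_zero hden h6)]
    ring
  have key : z ^ (-(d : ℤ)) - psiOpt d z * phiCubic z = alpha1 ^ (-(d : ℤ)) := by
    rw [hmul]; ring
  rw [key, norm_zpow, abs_alpha1]
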